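/- For the classical Kantorovich operators K_n and every x ∈ [0,1], the fourth central moment satisfies K_n((t − x)^4; x) = (3 n^2 x^2(1−x)^2 + 5 n x(1−x)(1−2x)^2 + x^4 − 2x^3 + 2x^2 − x + 1/5)/(n+1)^4. -/

import Mathlib

open MeasureTheory Set

noncomputable def kantorovich (n : ℕ) (f : ℝ → ℝ) (x : ℝ) : ℝ :=
  ((n : ℝ) + 1) * ∑ k ∈ Finset.range (n + 1),
    (n.choose k : ℝ) * x ^ k * (1 - x) ^ (n - k) *
      ∫ t in ((k : ℝ) / ((n : ℝ) + 1))..(((k : ℝ) + 1) / ((n : ℝ) + 1)), f t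

noncomputable def supNorm (f : ℝ → ℝ) : ℝ :=
  sSup {y | ∃ x ∈ Icc (0:ℝ) 1, y = |f x|}

noncomputable def omega1 (f : ℝ → ℝ) (h : ℝ) : ℝ :=
  sSup {d | ∃ s ∈ Icc (0:ℝ) 1, ∃ t ∈ Icc (0:ℝ) 1, |s - t| ≤ h ∧ d = |f s - f t|}

noncomputable def omega2 (f : ℝ → ℝ) (h : ℝ) : ℝ :=
  sSup {d | ∃ t δ : ℝ, 0 < δ ∧ δ ≤ h ∧ t - δ ∈ Icc (0:ℝ) 1 ∧ t + δ ∈ Icc (0:ℝ) 1 ∧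
    d = |f (t + δ) - 2 * f t + f (t - δ)|}

lemma choose_two_cast (k : ℕ) : 2 * (k.choose 2 : ℝ) = k * ((k:ℝ) - 1) := by
  induction k with
  | zero => simp
  | succ m ih =>
    rw [Nat.choose_succ_succ]
    push_cast [Nat.choose_one_right] at ih ⊢
    linear_combination ih

lemma choose_three_cast (k : ℕ) : 6 * (k.choose 3 : ℝ) = k * ((k:ℝ) - 1) * ((k:ℝ) - 2) := by
  induction k with
  | zero => simp
  | succ m ih =>
    have h2 := choose_two_cast m
    rw [Nat.choose_succ_succ]
    push_cast at ih h2 ⊢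
    linear_combination ih + 3 * h2

lemma choose_four_cast (k : ℕ) :
    24 * (k.choose 4 : ℝ) = k * ((k:ℝ) - 1) * ((k:ℝ) - 2) * ((k:ℝ) - 3) := by
  induction k with
  | zero => simp
  | succ m ih =>
    have h3 := choose_three_cast m
    rw [Nat.choose_succ_succ]
    push_cast at ih h3 ⊢
    linear_combination ih + 4 * h3

lemma binom_moment (n j : ℕ) (x : ℝ) :
    ∑ k ∈ Finset.range (n + 1),
        (n.choose k : ℝ) * x ^ k * (1 - x) ^ (n - k) * (k.choose j : ℝ)
      = (n.choose j : ℝ) * x ^ j := by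
  rcases le_or_gt j n with hj | hj
  · rw [Finset.range_eq_Ico,
      ← Finset.sum_Ico_consecutive _ (Nat.zero_le j) (by omega : j ≤ n + 1)]
    have h0 : ∑ k ∈ Finset.Ico 0 j,
        (n.choose k : ℝ) * x ^ k * (1 - x) ^ (n - k) * (k.choose j : ℝ) = 0 :=
      Finset.sum_eq_zero fun k hk => by
        simp [Nat.choose_eq_zero_of_lt (Finset.mem_Ico.mp hk).2]
    rw [h0, zero_add, Finset.sum_Ico_eq_sum_range,
      (by omega : n + 1 - j = (n - j) + 1)]
    have hterm : ∀ m ∈ Finset.range ((n - j) + 1),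
        (n.choose (j + m) : ℝ) * x ^ (j + m) * (1 - x) ^ (n - (j + m)) *
            ((j + m).choose j : ℝ)
          = (n.choose j : ℝ) * x ^ j *
              (((n - j).choose m : ℝ) * x ^ m * (1 - x) ^ ((n - j) - m)) := by
      intro m hm
      have hm' : m ≤ n - j := by have := Finset.mem_range.mp hm; omega
      have hkn : j + m ≤ n := by omega
      have hc : n.choose (j + m) * (j + m).choose j = n.choose j * (n - j).choose m := by
        simpa [Nat.add_sub_cancel_left] using Nat.choose_mul (n := n) (Nat.le_add_right j m)
      have hcR : (n.choose (j + m) : ℝ) * ((j + m).choose j : ℝ)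
          = (n.choose j : ℝ) * ((n - j).choose m : ℝ) := by exact_mod_cast congrArg Nat.cast hc
      rw [(by omega : n - (j + m) = (n - j) - m), pow_add]
      linear_combination (x ^ j * x ^ m * (1 - x) ^ ((n - j) - m)) * hcR
    rw [Finset.sum_congr rfl hterm, ← Finset.mul_sum]
    have hb : ∑ m ∈ Finset.range ((n - j) + 1),
        ((n - j).choose m : ℝ) * x ^ m * (1 - x) ^ ((n - j) - m) = 1 := by
      have h := add_pow x (1 - x) (n - j)
      rw [(by ring : x + (1 - x) = (1:ℝ)), one_pow] at h
      rw [show (∑ m ∈ Finset.range ((n - j) + 1),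
          ((n - j).choose m : ℝ) * x ^ m * (1 - x) ^ ((n - j) - m))
        = ∑ m ∈ Finset.range ((n - j) + 1),
          x ^ m * (1 - x) ^ ((n - j) - m) * ((n - j).choose m : ℝ)
        from Finset.sum_congr rfl fun m _ => by ring, ← h]
    rw [hb, mul_one]
  · rw [Nat.choose_eq_zero_of_lt hj]
    push_cast
    rw [zero_mul]
    exact Finset.sum_eq_zero fun k hk => by
      have : k < j := by have := Finset.mem_range.mp hk; omega
      simp [Nat.choose_eq_zero_of_lt this]

theorem kantorovich_fourth_central_moment (n : ℕ) (hn : 1 ≤ n) (x : ℝ)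
    (hx : x ∈ Icc (0:ℝ) 1) :
    kantorovich n (fun t => (t - x) ^ 4) x
      = (3 * (n : ℝ) ^ 2 * x ^ 2 * (1 - x) ^ 2
          + 5 * (n : ℝ) * x * (1 - x) * (1 - 2 * x) ^ 2
          + x ^ 4 - 2 * x ^ 3 + 2 * x ^ 2 - x + 1 / 5) / ((n : ℝ) + 1) ^ 4 := by
  have hN : ((n:ℝ) + 1) ≠ 0 := by positivity
  have hint : ∀ u v : ℝ, (∫ t in u..v, (t - x) ^ 4) = ((v - x) ^ 5 - (u - x) ^ 5) / 5 := by
    intro u v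
    rw [intervalIntegral.integral_comp_sub_right (fun s => s ^ 4) x, integral_pow]
    norm_num
  have S0 : ∑ k ∈ Finset.range (n+1), (n.choose k:ℝ) * x^k * (1-x)^(n-k) = 1 := by
    simpa using binom_moment n 0 x
  have S1 : ∑ k ∈ Finset.range (n+1), (n.choose k:ℝ) * x^k * (1-x)^(n-k) * (k:ℝ)
      = (n:ℝ) * x := by
    simpa [Nat.choose_one_right] using binom_moment n 1 x
  have S2 : ∑ k ∈ Finset.range (n+1),
      (n.choose k:ℝ) * x^k * (1-x)^(n-k) * ((k:ℝ) * ((k:ℝ)-1))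
      = (n:ℝ) * ((n:ℝ)-1) * x^2 := by
    calc ∑ k ∈ Finset.range (n+1),
        (n.choose k:ℝ) * x^k * (1-x)^(n-k) * ((k:ℝ) * ((k:ℝ)-1))
        = ∑ k ∈ Finset.range (n+1),
          2 * ((n.choose k:ℝ) * x^k * (1-x)^(n-k) * (k.choose 2 : ℝ)) :=
          Finset.sum_congr rfl fun k _ => by
            rw [show (k:ℝ) * ((k:ℝ)-1) = 2 * (k.choose 2 : ℝ) from (choose_two_cast k).symm]
            ring
      _ = 2 * ((n.choose 2:ℝ) * x^2) := by rw [← Finset.mul_sum, binom_moment]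
      _ = (n:ℝ) * ((n:ℝ)-1) * x^2 := by linear_combination x^2 * choose_two_cast n
  have S3 : ∑ k ∈ Finset.range (n+1),
      (n.choose k:ℝ) * x^k * (1-x)^(n-k) * ((k:ℝ) * ((k:ℝ)-1) * ((k:ℝ)-2))
      = (n:ℝ) * ((n:ℝ)-1) * ((n:ℝ)-2) * x^3 := by
    calc ∑ k ∈ Finset.range (n+1),
        (n.choose k:ℝ) * x^k * (1-x)^(n-k) * ((k:ℝ) * ((k:ℝ)-1) * ((k:ℝ)-2))
        = ∑ k ∈ Finset.range (n+1),
          6 * ((n.choose k:ℝ) * x^k * (1-x)^(n-k) * (k.choose 3 : ℝ)) :=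
          Finset.sum_congr rfl fun k _ => by
            rw [show (k:ℝ) * ((k:ℝ)-1) * ((k:ℝ)-2) = 6 * (k.choose 3 : ℝ) from
              (choose_three_cast k).symm]
            ring
      _ = 6 * ((n.choose 3:ℝ) * x^3) := by rw [← Finset.mul_sum, binom_moment]
      _ = (n:ℝ) * ((n:ℝ)-1) * ((n:ℝ)-2) * x^3 := by
          linear_combination x^3 * choose_three_cast n
  have S4 : ∑ k ∈ Finset.range (n+1),
      (n.choose k:ℝ) * x^k * (1-x)^(n-k) * ((k:ℝ) * ((k:ℝ)-1) * ((k:ℝ)-2) * ((k:ℝ)-3))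
      = (n:ℝ) * ((n:ℝ)-1) * ((n:ℝ)-2) * ((n:ℝ)-3) * x^4 := by
    calc ∑ k ∈ Finset.range (n+1),
        (n.choose k:ℝ) * x^k * (1-x)^(n-k) * ((k:ℝ) * ((k:ℝ)-1) * ((k:ℝ)-2) * ((k:ℝ)-3))
        = ∑ k ∈ Finset.range (n+1),
          24 * ((n.choose k:ℝ) * x^k * (1-x)^(n-k) * (k.choose 4 : ℝ)) :=
          Finset.sum_congr rfl fun k _ => by
            rw [show (k:ℝ) * ((k:ℝ)-1) * ((k:ℝ)-2) * ((k:ℝ)-3) = 24 * (k.choose 4 : ℝ) from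
              (choose_four_cast k).symm]
            ring
      _ = 24 * ((n.choose 4:ℝ) * x^4) := by rw [← Finset.mul_sum, binom_moment]
      _ = (n:ℝ) * ((n:ℝ)-1) * ((n:ℝ)-2) * ((n:ℝ)-3) * x^4 := by
          linear_combination x^4 * choose_four_cast n
  have step : ∀ k ∈ Finset.range (n+1),
      (n.choose k:ℝ) * x^k * (1-x)^(n-k) *
        (∫ t in ((k:ℝ)/((n:ℝ)+1))..(((k:ℝ)+1)/((n:ℝ)+1)), (t - x) ^ 4)
      = (1/((n:ℝ)+1)^5) *
        (((((n:ℝ)+1)*x)^4 - 2*(((n:ℝ)+1)*x)^3 + 2*(((n:ℝ)+1)*x)^2 - ((n:ℝ)+1)*x + 1/5)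
            * ((n.choose k:ℝ) * x^k * (1-x)^(n-k))
          + (-4*(((n:ℝ)+1)*x)^3 + 12*(((n:ℝ)+1)*x)^2 - 14*(((n:ℝ)+1)*x) + 6)
            * ((n.choose k:ℝ) * x^k * (1-x)^(n-k) * (k:ℝ))
          + (6*(((n:ℝ)+1)*x)^2 - 18*(((n:ℝ)+1)*x) + 15)
            * ((n.choose k:ℝ) * x^k * (1-x)^(n-k) * ((k:ℝ) * ((k:ℝ)-1)))
          + (8 - 4*(((n:ℝ)+1)*x))
            * ((n.choose k:ℝ) * x^k * (1-x)^(n-k) * ((k:ℝ) * ((k:ℝ)-1) * ((k:ℝ)-2)))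
          + ((n.choose k:ℝ) * x^k * (1-x)^(n-k)
              * ((k:ℝ) * ((k:ℝ)-1) * ((k:ℝ)-2) * ((k:ℝ)-3)))) := by
    intro k _
    rw [hint]
    field_simp
    ring
  simp only [kantorovich]
  rw [Finset.sum_congr rfl step, ← Finset.mul_sum]
  simp only [Finset.sum_add_distrib, ← Finset.mul_sum]
  rw [S0, S1, S2, S3, S4]
  field_simp
  ring
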